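/- Let n ≥ 1 be a natural number and let ψ : (Fin n → Fin 2) → ℝ be any function (estimator). Then ∫_0^1 Σ_{x : Fin n → Fin 2} w^{|x|} (1−w)^{n−|x|} · |w − ψ(x)| dw ≥ (2/27) · (2n+1)·C(2n,n) / ((n+1)·4^n), and in particular this Bayesian risk is at least 7/(72·√(π n)). -/

import Mathlib

set_option maxHeartbeats 1000000
open intervalIntegral

lemma beta_step (a b : ℕ) :
    ((a:ℝ)+1) * ∫ x in (0:ℝ)..1, x^a * (1-x)^(b+1)
      = ((b:ℝ)+1) * ∫ x in (0:ℝ)..1, x^(a+1) * (1-x)^b := by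
  have hd : ∀ x : ℝ, HasDerivAt (fun y : ℝ => y^(a+1) * (1-y)^(b+1))
      (((a:ℝ)+1) * (x^a * (1-x)^(b+1)) - ((b:ℝ)+1) * (x^(a+1) * (1-x)^b)) x := by
    intro x
    have h1 : HasDerivAt (fun y : ℝ => y^(a+1)) (((a:ℝ)+1) * x^a) x := by
      simpa using (hasDerivAt_pow (a+1) x)
    have h2 : HasDerivAt (fun y : ℝ => (1-y)^(b+1)) (-(((b:ℝ)+1) * (1-x)^b)) x := by
      have := ((hasDerivAt_pow (b+1) (1-x)).comp x ((hasDerivAt_const x (1:ℝ)).sub (hasDerivAt_id x)))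
      simpa [Function.comp_def] using this
    have := h1.mul h2
    exact this.congr_deriv (by ring)
  have key : ∫ x in (0:ℝ)..1,
      (((a:ℝ)+1) * (x^a * (1-x)^(b+1)) - ((b:ℝ)+1) * (x^(a+1) * (1-x)^b)) = 0 := by
    rw [integral_eq_sub_of_hasDerivAt (fun x _ => hd x)]
    · simp
    · apply Continuous.intervalIntegrable; continuity
  have i1 : IntervalIntegrable (fun x : ℝ => x^a * (1-x)^(b+1)) MeasureTheory.volume 0 1 := by
    apply Continuous.intervalIntegrable; continuity
  have i2 : IntervalIntegrable (fun x : ℝ => x^(a+1) * (1-x)^b) MeasureTheory.volume 0 1 := by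
    apply Continuous.intervalIntegrable; continuity
  rw [integral_sub ((i1.const_mul _)) ((i2.const_mul _)), integral_const_mul, integral_const_mul] at key
  linarith

lemma beta_nat (b a : ℕ) : ∫ x in (0:ℝ)..1, x^a * (1-x)^b
    = ((a.factorial : ℝ) * b.factorial) / (a+b+1).factorial := by
  induction b generalizing a with
  | zero =>
    have ha : ((a:ℝ)+1) ≠ 0 := by positivity
    simp [integral_pow, Nat.factorial_succ]
    field_simp
  | succ b ih =>
    have h := beta_step a b
    rw [ih (a+1)] at h
    have ha : ((a:ℝ)+1) ≠ 0 := by positivity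
    have h2 : (∫ x in (0:ℝ)..1, x^a * (1-x)^(b+1))
        = ((b:ℝ)+1) * (((a+1).factorial : ℝ) * b.factorial / ((a+1)+b+1).factorial) / ((a:ℝ)+1) := by
      field_simp at h ⊢; linarith
    rw [h2]
    have e1 : ((a+1).factorial : ℝ) = ((a:ℝ)+1) * a.factorial := by
      rw [Nat.factorial_succ]; push_cast; ring
    have e2 : ((a+(b+1)+1).factorial : ℝ) = ((a+1)+b+1).factorial := by norm_num; ring_nf
    have e3 : ((b+1).factorial : ℝ) = ((b:ℝ)+1) * b.factorial := by
      rw [Nat.factorial_succ]; push_cast; ring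
    rw [e1, e3, e2]
    have hfneq : (((a+1)+b+1).factorial : ℝ) ≠ 0 := by positivity
    field_simp

open Finset

private lemma sym_aux (m : ℕ) :
    2 * ∑ k ∈ range (m+1), k * (Nat.centralBinom k * Nat.centralBinom (m-k))
      = m * ∑ k ∈ range (m+1), Nat.centralBinom k * Nat.centralBinom (m-k) := by
  have hrefl : ∑ k ∈ range (m+1), (m-k) * (Nat.centralBinom (m-k) * Nat.centralBinom (m-(m-k)))
      = ∑ k ∈ range (m+1), k * (Nat.centralBinom k * Nat.centralBinom (m-k)) := by
    have := Finset.sum_range_reflect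
      (fun k => k * (Nat.centralBinom k * Nat.centralBinom (m-k))) (m+1)
    simpa using this
  have hsimp : ∀ k ∈ range (m+1),
      (m-k) * (Nat.centralBinom (m-k) * Nat.centralBinom (m-(m-k)))
        = (m-k) * (Nat.centralBinom k * Nat.centralBinom (m-k)) := by
    intro k hk
    rw [Nat.sub_sub_self (Nat.lt_succ_iff.mp (mem_range.mp hk))]
    ring
  rw [Finset.sum_congr rfl hsimp] at hrefl
  calc 2 * ∑ k ∈ range (m+1), k * (Nat.centralBinom k * Nat.centralBinom (m-k))
      = (∑ k ∈ range (m+1), k * (Nat.centralBinom k * Nat.centralBinom (m-k)))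
        + ∑ k ∈ range (m+1), (m-k) * (Nat.centralBinom k * Nat.centralBinom (m-k)) := by
        rw [← hrefl]; ring_nf
    _ = ∑ k ∈ range (m+1), (k + (m-k)) * (Nat.centralBinom k * Nat.centralBinom (m-k)) := by
        rw [← Finset.sum_add_distrib]; apply Finset.sum_congr rfl; intros; ring
    _ = m * ∑ k ∈ range (m+1), Nat.centralBinom k * Nat.centralBinom (m-k) := by
        rw [Finset.mul_sum]; apply Finset.sum_congr rfl
        intro k hk
        rw [Nat.add_sub_cancel' (Nat.lt_succ_iff.mp (mem_range.mp hk))]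

lemma sum_centralBinom_mul (n : ℕ) :
    ∑ k ∈ range (n+1), Nat.centralBinom k * Nat.centralBinom (n-k) = 4^n := by
  induction n with
  | zero => simp [Nat.centralBinom]
  | succ n ih =>
    have h1 := sym_aux (n+1)
    have h2 : (n+1) * ∑ k ∈ range (n+1+1), Nat.centralBinom k * Nat.centralBinom (n+1-k)
        = (∑ k ∈ range (n+1+1), (n+1-k) * (Nat.centralBinom k * Nat.centralBinom (n+1-k)))
          + ∑ k ∈ range (n+1+1), k * (Nat.centralBinom k * Nat.centralBinom (n+1-k)) := by
      rw [Finset.mul_sum, ← Finset.sum_add_distrib]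
      apply Finset.sum_congr rfl
      intro k hk
      have hkle : k ≤ n+1 := Nat.lt_succ_iff.mp (mem_range.mp hk)
      rw [← add_mul, Nat.sub_add_cancel hkle]
    have key : (n+1) * ∑ k ∈ range (n+1+1), Nat.centralBinom k * Nat.centralBinom (n+1-k)
        = 2 * ∑ k ∈ range (n+1+1), (n+1-k) * (Nat.centralBinom k * Nat.centralBinom (n+1-k)) := by
      omega
    have step : ∑ k ∈ range (n+1+1), (n+1-k) * (Nat.centralBinom k * Nat.centralBinom (n+1-k))
        = 2 * ∑ k ∈ range (n+1), (2*(n-k)+1) * (Nat.centralBinom k * Nat.centralBinom (n-k)) := by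
      rw [Finset.sum_range_succ]
      simp only [Nat.sub_self, zero_mul, add_zero]
      rw [Finset.mul_sum]
      apply Finset.sum_congr rfl
      intro k hk
      have hkle : k ≤ n := Nat.lt_succ_iff.mp (mem_range.mp hk)
      have h3 : n + 1 - k = (n - k) + 1 := by omega
      rw [h3]
      have hc := Nat.succ_mul_centralBinom_succ (n-k)
      calc ((n-k)+1) * (Nat.centralBinom k * Nat.centralBinom ((n-k)+1))
          = Nat.centralBinom k * (((n-k)+1) * Nat.centralBinom ((n-k)+1)) := by ring
        _ = Nat.centralBinom k * (2 * (2*(n-k)+1) * Nat.centralBinom (n-k)) := by rw [hc]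
        _ = 2 * ((2*(n-k)+1) * (Nat.centralBinom k * Nat.centralBinom (n-k))) := by ring
    have expand : ∑ k ∈ range (n+1), (2*(n-k)+1) * (Nat.centralBinom k * Nat.centralBinom (n-k))
        = 2 * (∑ k ∈ range (n+1), (n-k) * (Nat.centralBinom k * Nat.centralBinom (n-k)))
          + ∑ k ∈ range (n+1), Nat.centralBinom k * Nat.centralBinom (n-k) := by
      rw [Finset.mul_sum, ← Finset.sum_add_distrib]
      apply Finset.sum_congr rfl; intros; ring
    have hrefl2 : ∑ k ∈ range (n+1), (n-k) * (Nat.centralBinom k * Nat.centralBinom (n-k))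
        = ∑ k ∈ range (n+1), k * (Nat.centralBinom k * Nat.centralBinom (n-k)) := by
      have := Finset.sum_range_reflect
        (fun k => k * (Nat.centralBinom k * Nat.centralBinom (n-k))) (n+1)
      simp only [Nat.add_sub_cancel] at this
      rw [← this]
      apply Finset.sum_congr rfl
      intro k hk
      have hkle : k ≤ n := Nat.lt_succ_iff.mp (mem_range.mp hk)
      rw [Nat.sub_sub_self hkle]
      ring
    have h0 := sym_aux n
    have final : (n+1) * ∑ k ∈ range (n+1+1), Nat.centralBinom k * Nat.centralBinom (n+1-k)
        = (n+1) * (4 * ∑ k ∈ range (n+1), Nat.centralBinom k * Nat.centralBinom (n-k)) := by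
      rw [key, step, expand, hrefl2]
      have : 2 * (2 * (2 * (∑ k ∈ range (n+1), k * (Nat.centralBinom k * Nat.centralBinom (n-k)))
          + ∑ k ∈ range (n+1), Nat.centralBinom k * Nat.centralBinom (n-k)))
          = 2 * (2 * (n * (∑ k ∈ range (n+1), Nat.centralBinom k * Nat.centralBinom (n-k))
          + ∑ k ∈ range (n+1), Nat.centralBinom k * Nat.centralBinom (n-k))) := by
        omega
      rw [this]; ring
    have := Nat.eq_of_mul_eq_mul_left (Nat.succ_pos n) final
    rw [this, ih]
    ring

open Finset

private lemma fin2_cases (v : Fin 2) : v = 0 ∨ v = 1 := by omega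

private def binEquiv (n : ℕ) : (Fin n → Fin 2) ≃ Finset (Fin n) where
  toFun x := univ.filter (fun i => x i = 1)
  invFun s := fun i => if i ∈ s then 1 else 0
  left_inv x := by
    funext i
    rcases fin2_cases (x i) with h | h <;> simp [h]
  right_inv s := by
    ext i
    by_cases h : i ∈ s <;> simp [h]

private lemma count_ones (n : ℕ) (x : Fin n → Fin 2) :
    (∑ i, (x i).val) = (univ.filter (fun i => x i = 1)).card := by
  rw [Finset.card_filter]
  apply Finset.sum_congr rfl
  intro i _
  rcases fin2_cases (x i) with h | h <;> simp [h]

lemma sum_group_count {M : Type*} [AddCommMonoid M] (n : ℕ) (f : ℕ → M) :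
    ∑ x : Fin n → Fin 2, f (∑ i, (x i).val)
      = ∑ k ∈ range (n+1), (n.choose k) • f k := by
  rw [Fintype.sum_equiv (binEquiv n) _ (fun s => f s.card)
    (fun x => by rw [count_ones]; rfl)]
  have : (univ : Finset (Finset (Fin n))) = (univ : Finset (Fin n)).powerset := by
    simp
  rw [this, Finset.powerset_card_biUnion, Finset.sum_biUnion]
  · apply Finset.sum_congr (by simp) ?_
    intro k hk
    rw [Finset.sum_congr rfl (fun s hs => by
      rw [(Finset.mem_powersetCard.mp hs).2]), Finset.sum_const,
      Finset.card_powersetCard, Finset.card_univ, Fintype.card_fin]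
  · intro i _ j _ hij
    apply Finset.disjoint_left.mpr
    intro s hsi hsj
    exact hij ((Finset.mem_powersetCard.mp hsi).2.symm.trans (Finset.mem_powersetCard.mp hsj).2)

open Finset intervalIntegral MeasureTheory Real

private lemma clamp_abs (ψ w : ℝ) (hw : w ∈ Set.Icc (0:ℝ) 1) :
    |w - max 0 (min 1 ψ)| ≤ |w - ψ| := by
  obtain ⟨h0, h1⟩ := hw
  rcases le_total ψ 0 with h | h
  · rw [min_eq_right (le_trans h zero_le_one), max_eq_left h]
    rw [abs_of_nonneg (by linarith), abs_of_nonneg (by linarith)]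
    linarith
  · rcases le_total 1 ψ with h' | h'
    · rw [min_eq_left h', max_eq_right zero_le_one]
      rw [abs_of_nonpos (by linarith), abs_of_nonpos (by linarith)]
      linarith
    · rw [min_eq_right h', max_eq_right h]

private lemma one_dim_bound (a b : ℕ) (ψ t lam q : ℝ) (ht : 0 < t) (hlam : 0 < lam)
    (hq : 0 < q) :
    t * ((∫ w in (0:ℝ)..1, w^a*(1-w)^b)
        - ((∫ w in (0:ℝ)..1, (w^a*(1-w)^b)^2)/(2*lam*q) + lam*q*t))
      ≤ ∫ w in (0:ℝ)..1, w^a*(1-w)^b*|w - ψ| := by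
  set c := max 0 (min 1 ψ) with hc
  have hc0 : 0 ≤ c := le_max_left _ _
  have hc1 : c ≤ 1 := max_le zero_le_one (min_le_left _ _)
  have hpc : Continuous (fun w : ℝ => w^a*(1-w)^b) := by continuity
  have hpint : ∀ u v : ℝ, IntervalIntegrable (fun w : ℝ => w^a*(1-w)^b) volume u v :=
    fun u v => hpc.intervalIntegrable u v
  have hp2int : ∀ u v : ℝ, IntervalIntegrable (fun w : ℝ => (w^a*(1-w)^b)^2) volume u v :=
    fun u v => (hpc.pow 2).intervalIntegrable u v
  have habsint : ∀ (c' : ℝ) (u v : ℝ),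
      IntervalIntegrable (fun w : ℝ => w^a*(1-w)^b*|w - c'|) volume u v := by
    intro c' u v
    exact (hpc.mul (continuous_abs.comp (by continuity))).intervalIntegrable u v
  have hppos : ∀ w ∈ Set.Icc (0:ℝ) 1, 0 ≤ w^a*(1-w)^b := by
    intro w hw
    have h1 := hw.1
    have h2 : (0:ℝ) ≤ 1 - w := by linarith [hw.2]
    positivity
  -- step 0 : clamp
  have step0 : (∫ w in (0:ℝ)..1, w^a*(1-w)^b*|w - c|)
      ≤ ∫ w in (0:ℝ)..1, w^a*(1-w)^b*|w - ψ| := by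
    apply integral_mono_on zero_le_one (habsint c 0 1) (habsint ψ 0 1)
    intro w hw
    exact mul_le_mul_of_nonneg_left (clamp_abs ψ w hw) (hppos w hw)
  set u := max 0 (c - t) with hu
  set v := min 1 (c + t) with hv
  have hu0 : 0 ≤ u := le_max_left _ _
  have huc : u ≤ c := max_le hc0 (by linarith)
  have hcv : c ≤ v := le_min hc1 (by linarith)
  have hv1 : v ≤ 1 := min_le_left _ _
  have huv : u ≤ v := le_trans huc hcv
  have hsplit : (∫ w in (0:ℝ)..1, w^a*(1-w)^b*|w - c|)
      = (∫ w in (0:ℝ)..u, w^a*(1-w)^b*|w - c|) + (∫ w in u..v, w^a*(1-w)^b*|w - c|)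
        + ∫ w in v..(1:ℝ), w^a*(1-w)^b*|w - c| := by
    rw [integral_add_adjacent_intervals (habsint c 0 u) (habsint c u v),
      integral_add_adjacent_intervals (habsint c 0 v) (habsint c v 1)]
  have hsplitp : (∫ w in (0:ℝ)..1, w^a*(1-w)^b)
      = (∫ w in (0:ℝ)..u, w^a*(1-w)^b) + (∫ w in u..v, w^a*(1-w)^b)
        + ∫ w in v..(1:ℝ), w^a*(1-w)^b := by
    rw [integral_add_adjacent_intervals (hpint 0 u) (hpint u v),
      integral_add_adjacent_intervals (hpint 0 v) (hpint v 1)]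
  -- left piece
  have left : t * (∫ w in (0:ℝ)..u, w^a*(1-w)^b) ≤ ∫ w in (0:ℝ)..u, w^a*(1-w)^b*|w - c| := by
    rcases eq_or_lt_of_le hu0 with h | h
    · rw [← h, integral_same, integral_same, mul_zero]
    · have huct : u = c - t := by
        rcases le_or_gt (c - t) 0 with h1 | h1
        · exfalso; rw [hu, max_eq_left h1] at h; exact lt_irrefl _ h
        · exact max_eq_right h1.le
      rw [← intervalIntegral.integral_const_mul]
      apply integral_mono_on (le_of_lt h) ((hpint 0 u).const_mul t) (habsint c 0 u)
      intro w hw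
      have hw1 : w ≤ 1 := le_trans hw.2 (le_trans huc hc1)
      have habs : t ≤ |w - c| := by
        rw [abs_of_nonpos (by linarith [hw.2, huc.trans_eq rfl] : w - c ≤ 0)]
        have := hw.2
        rw [huct] at this
        linarith
      calc t * (w^a*(1-w)^b) = (w^a*(1-w)^b) * t := by ring
        _ ≤ (w^a*(1-w)^b) * |w - c| :=
          mul_le_mul_of_nonneg_left habs (hppos w ⟨hw.1, hw1⟩)
  -- right piece
  have right : t * (∫ w in v..(1:ℝ), w^a*(1-w)^b) ≤ ∫ w in v..(1:ℝ), w^a*(1-w)^b*|w - c| := by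
    rcases eq_or_lt_of_le hv1 with h | h
    · rw [h, integral_same, integral_same, mul_zero]
    · have hvct : v = c + t := by
        rcases le_or_gt 1 (c + t) with h1 | h1
        · exfalso; rw [hv, min_eq_left h1] at h; exact lt_irrefl _ h
        · exact min_eq_right h1.le
      rw [← intervalIntegral.integral_const_mul]
      apply integral_mono_on (le_of_lt h) ((hpint v 1).const_mul t) (habsint c v 1)
      intro w hw
      have hw0 : 0 ≤ w := le_trans (le_trans hu0 huv) hw.1
      have habs : t ≤ |w - c| := by
        rw [abs_of_nonneg (by linarith [hw.1, hcv] : 0 ≤ w - c)]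
        have := hw.1
        rw [hvct] at this
        linarith
      calc t * (w^a*(1-w)^b) = (w^a*(1-w)^b) * t := by ring
        _ ≤ (w^a*(1-w)^b) * |w - c| :=
          mul_le_mul_of_nonneg_left habs (hppos w ⟨hw0, hw.2⟩)
  -- middle piece nonneg
  have mid0 : 0 ≤ ∫ w in u..v, w^a*(1-w)^b*|w - c| := by
    apply integral_nonneg huv
    intro w hw
    exact mul_nonneg (hppos w ⟨le_trans hu0 hw.1, le_trans hw.2 hv1⟩) (abs_nonneg _)
  -- middle mass bound
  have mid2 : (∫ w in u..v, w^a*(1-w)^b)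
      ≤ (∫ w in (0:ℝ)..1, (w^a*(1-w)^b)^2)/(2*lam*q) + lam*q*t := by
    have amgm : ∀ w : ℝ, w^a*(1-w)^b ≤ (w^a*(1-w)^b)^2/(2*lam*q) + lam*q/2 := by
      intro w
      have h2 : 0 < 2*lam*q := by positivity
      rw [div_add' _ _ _ (ne_of_gt h2), le_div_iff₀ h2]
      nlinarith [sq_nonneg (w^a*(1-w)^b - lam*q)]
    have step1 : (∫ w in u..v, w^a*(1-w)^b)
        ≤ ∫ w in u..v, ((w^a*(1-w)^b)^2/(2*lam*q) + lam*q/2) := by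
      apply integral_mono_on huv (hpint u v)
        (((hp2int u v).div_const _).add (intervalIntegrable_const))
      intro w _
      exact amgm w
    have step2 : (∫ w in u..v, ((w^a*(1-w)^b)^2/(2*lam*q) + lam*q/2))
        = (∫ w in u..v, (w^a*(1-w)^b)^2)/(2*lam*q) + lam*q/2*(v-u) := by
      rw [integral_add ((hp2int u v).div_const _) intervalIntegrable_const,
        intervalIntegral.integral_div, intervalIntegral.integral_const, smul_eq_mul]
      ring
    have step3 : (∫ w in u..v, (w^a*(1-w)^b)^2) ≤ ∫ w in (0:ℝ)..1, (w^a*(1-w)^b)^2 := by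
      apply integral_mono_interval hu0 huv hv1
      · filter_upwards with w using sq_nonneg _
      · exact hp2int 0 1
    have hvu : v - u ≤ 2*t := by
      have : c - t ≤ u := le_max_right _ _
      have : v ≤ c + t := min_le_right _ _
      linarith
    have h2 : 0 < 2*lam*q := by positivity
    calc (∫ w in u..v, w^a*(1-w)^b) ≤ _ := step1
      _ = _ := step2
      _ ≤ (∫ w in (0:ℝ)..1, (w^a*(1-w)^b)^2)/(2*lam*q) + lam*q/2*(2*t) := by
          gcongr
      _ = (∫ w in (0:ℝ)..1, (w^a*(1-w)^b)^2)/(2*lam*q) + lam*q*t := by ring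
  -- assemble
  have assemble : t * ((∫ w in (0:ℝ)..1, w^a*(1-w)^b)
        - ((∫ w in (0:ℝ)..1, (w^a*(1-w)^b)^2)/(2*lam*q) + lam*q*t))
      ≤ ∫ w in (0:ℝ)..1, w^a*(1-w)^b*|w - c| := by
    rw [hsplit, hsplitp]
    have := mul_le_mul_of_nonneg_left mid2 (le_of_lt ht)
    nlinarith [left, right, mid0]
  linarith [step0, assemble]


private lemma stirling_lb (m : ℕ) (hm : 1 ≤ m) : Real.sqrt Real.pi ≤ Stirling.stirlingSeq m := by
  obtain ⟨k, rfl⟩ := Nat.exists_eq_add_of_le hm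
  have := Stirling.stirlingSeq'_antitone.le_of_tendsto
    (Stirling.tendsto_stirlingSeq_sqrt_pi.comp (Filter.tendsto_add_atTop_nat 1)) k
  simpa [Function.comp, Nat.add_comm] using this

private lemma stirling_two : Stirling.stirlingSeq 2 = Real.exp 1 ^ 2 / 4 := by
  unfold Stirling.stirlingSeq
  have h4 : Real.sqrt (2*(2:ℕ)) = 2 := by
    rw [show (2*(2:ℕ):ℝ) = 4 by norm_num, show (4:ℝ) = 2^2 by norm_num, Real.sqrt_sq (by norm_num)]
  rw [h4]
  have he : Real.exp 1 ≠ 0 := Real.exp_ne_zero 1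
  norm_num [Nat.factorial]
  rw [div_pow]
  field_simp
  rw [show Real.exp 2 = Real.exp 1 ^ 2 by rw [← Real.exp_nat_mul]; norm_num]
  ring

private lemma stirling_id (n : ℕ) (hn : 1 ≤ n) :
    (4:ℝ)^n * (n.factorial:ℝ)^2 / ((2*n).factorial)
      = Real.sqrt n * (Stirling.stirlingSeq n)^2 / Stirling.stirlingSeq (2*n) := by
  unfold Stirling.stirlingSeq
  have hnpos : (0:ℝ) < n := by exact_mod_cast hn
  have he : (0:ℝ) < Real.exp 1 := Real.exp_pos 1
  have hsn : (0:ℝ) < Real.sqrt (2*(n:ℕ)) := Real.sqrt_pos.mpr (by positivity)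
  have hs2n : Real.sqrt (2*((2*n:ℕ)):ℝ) = 2 * Real.sqrt n := by
    push_cast
    rw [show (2*(2*(n:ℝ))) = 4 * n by ring, show (4:ℝ)*n = 2^2*n by norm_num,
      Real.sqrt_mul (by positivity), Real.sqrt_sq (by norm_num)]
  have hpw : (((2*n:ℕ):ℝ)/Real.exp 1)^(2*n) = 4^n * (((n:ℝ)/Real.exp 1)^n)^2 := by
    push_cast
    rw [show (2*(n:ℝ))/Real.exp 1 = 2 * ((n:ℝ)/Real.exp 1) by ring, mul_pow,
      ← pow_mul, pow_mul 2 2 n]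
    norm_num
    ring
  rw [hs2n, hpw]
  have hne1 : ((n:ℝ)/Real.exp 1)^n ≠ 0 := by positivity
  have hne2 : Real.sqrt (2*(n:ℕ)) ≠ 0 := ne_of_gt hsn
  have hne3 : Real.sqrt (n:ℝ) ≠ 0 := by positivity
  have hne4 : ((2*n).factorial : ℝ) ≠ 0 := by positivity
  have hne5 : (n.factorial : ℝ) ≠ 0 := by positivity
  field_simp
  rw [Real.sq_sqrt (by positivity), Real.sq_sqrt hnpos.le]
  ring

private lemma S_le (n : ℕ) (hn : 1 ≤ n) :
    ((n:ℝ)+1)*4^n/((2*(n:ℝ)+1)*((2*n).choose n)) ≤ 16 * Real.sqrt (Real.pi * n) / 21 := by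
  have hpi : 0 < Real.pi := Real.pi_pos
  have hnpos : (0:ℝ) < n := by exact_mod_cast hn
  have hsqrtpi : (7:ℝ)/4 ≤ Real.sqrt Real.pi := by
    rw [show (7:ℝ)/4 = Real.sqrt ((7/4)^2) by rw [Real.sqrt_sq (by norm_num)]]
    apply Real.sqrt_le_sqrt
    nlinarith [Real.pi_gt_d6]
  have hsplit : Real.sqrt (Real.pi * n) = Real.sqrt Real.pi * Real.sqrt n :=
    Real.sqrt_mul (le_of_lt hpi) _
  have hC : ((2*n).choose n : ℝ) = ((2*n).factorial : ℝ) / ((n.factorial : ℝ) * (n.factorial : ℝ)) := by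
    rw [Nat.cast_choose ℝ (by omega : n ≤ 2*n), show 2*n - n = n by omega]
  have hCpos : (0:ℝ) < ((2*n).choose n : ℝ) := by
    exact_mod_cast Nat.choose_pos (by omega : n ≤ 2*n)
  rcases eq_or_lt_of_le hn with h1 | h1
  · -- n = 1
    subst h1
    have : ((2*1).choose 1 : ℝ) = 2 := by norm_num
    rw [this]
    have hs1 : Real.sqrt (Real.pi * (1:ℕ)) = Real.sqrt Real.pi := by norm_num
    rw [hs1]
    push_cast
    norm_num
    rw [div_le_div_iff₀ (by norm_num) (by norm_num)]
    linarith [hsqrtpi]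
  · -- n ≥ 2
    have hn2 : 2 ≤ n := h1
    have hid := stirling_id n hn
    have hs2n_lb : Real.sqrt Real.pi ≤ Stirling.stirlingSeq (2*n) := stirling_lb (2*n) (by omega)
    have hsn_ub : Stirling.stirlingSeq n ≤ Real.exp 1 ^2 / 4 := by
      rw [← stirling_two]
      obtain ⟨k, rfl⟩ := Nat.exists_eq_add_of_le hn2
      have h := Stirling.stirlingSeq'_antitone (Nat.le_add_right 1 k)
      simp only [Function.comp_apply] at h
      have e : (1+k).succ = 2+k := by omega
      have e2 : Nat.succ 1 = 2 := rfl
      rw [e, e2] at h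
      exact h
    have hsn_pos : 0 < Stirling.stirlingSeq n := Stirling.stirlingSeq'_pos (n-1) |>.trans_eq (by congr 1; omega)
    have hs2n_pos : 0 < Stirling.stirlingSeq (2*n) := lt_of_lt_of_le (Real.sqrt_pos.mpr hpi) hs2n_lb
    have hsnn : (0:ℝ) < Real.sqrt n := Real.sqrt_pos.mpr hnpos
    -- 4^n/C = √n sn²/s2n ≤ √n (e²/4)²/√π
    have hfrac : (4:ℝ)^n * (n.factorial:ℝ)^2 / ((2*n).factorial)
        ≤ Real.sqrt n * (Real.exp 1^2/4)^2 / Real.sqrt Real.pi := by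
      rw [hid]
      apply div_le_div₀ (by positivity) ?_ (Real.sqrt_pos.mpr hpi) hs2n_lb
      apply mul_le_mul_of_nonneg_left ?_ (le_of_lt hsnn)
      exact pow_le_pow_left₀ (le_of_lt hsn_pos) hsn_ub 2
    -- conclude
    have hfactpos : (0:ℝ) < (n.factorial : ℝ) := by positivity
    have hS_eq : ((n:ℝ)+1)*4^n/((2*(n:ℝ)+1)*((2*n).choose n))
        = ((n:ℝ)+1)/(2*(n:ℝ)+1) * ((4:ℝ)^n * (n.factorial:ℝ)^2 / ((2*n).factorial)) := by
      rw [hC]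
      have : ((2*n).factorial : ℝ) ≠ 0 := by positivity
      field_simp
    rw [hS_eq, hsplit]
    have hratio : ((n:ℝ)+1)/(2*(n:ℝ)+1) ≤ 3/5 := by
      rw [div_le_div_iff₀ (by positivity) (by norm_num)]
      have : (2:ℝ) ≤ n := by exact_mod_cast hn2
      linarith
    have he4 : Real.exp 1 ^ 2 ≤ 2.7182818286^2 := by
      have := Real.exp_one_lt_d9
      nlinarith [Real.exp_pos 1]
    calc ((n:ℝ)+1)/(2*(n:ℝ)+1) * ((4:ℝ)^n * (n.factorial:ℝ)^2 / ((2*n).factorial))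
        ≤ (3/5) * (Real.sqrt n * (Real.exp 1^2/4)^2 / Real.sqrt Real.pi) := by
          apply mul_le_mul hratio hfrac (by positivity) (by norm_num)
      _ ≤ 16 * (Real.sqrt Real.pi * Real.sqrt n) / 21 := by
          have he2 : Real.exp 1^2 ≤ 7.3890561 := by nlinarith [Real.exp_pos 1, he4]
          have hexp : (Real.exp 1^2/4)^2 ≤ 3.42 := by nlinarith [he2, sq_nonneg (Real.exp 1)]
          have hsp : (7:ℝ)/4 ≤ Real.sqrt Real.pi := hsqrtpi
          have hE0 : (0:ℝ) ≤ (Real.exp 1^2/4)^2 := by positivity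
          have key : (3:ℝ)/5 * (Real.sqrt n * (Real.exp 1^2/4)^2 / Real.sqrt Real.pi)
              = (3*(Real.sqrt n * (Real.exp 1^2/4)^2))/(5*Real.sqrt Real.pi) := by ring
          rw [key, div_le_div_iff₀ (by positivity) (by norm_num)]
          have h2 : (49:ℝ)/16 ≤ Real.sqrt Real.pi * Real.sqrt Real.pi := by nlinarith
          have h3 : Real.sqrt n * (Real.exp 1^2/4)^2 ≤ Real.sqrt n * 3.42 :=
            mul_le_mul_of_nonneg_left hexp hsnn.le
          have hr2 : Real.sqrt n * (49/16) ≤ Real.sqrt n * (Real.sqrt Real.pi * Real.sqrt Real.pi) :=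
            mul_le_mul_of_nonneg_left h2 hsnn.le
          ring_nf at h3 hr2 ⊢
          nlinarith [h3, hr2, hsnn.le]
open Finset in
private lemma sum_qf (n : ℕ) :
    ∑ k ∈ range (n+1), (n.choose k) • ((k.factorial * (n-k).factorial : ℝ)/(n+1).factorial) = 1 := by
  have h : ∀ k ∈ range (n+1), (n.choose k) • ((k.factorial * (n-k).factorial : ℝ)/(n+1).factorial)
      = (n.factorial : ℝ)/(n+1).factorial := by
    intro k hk
    have hkn : k ≤ n := Nat.lt_succ_iff.mp (mem_range.mp hk)
    rw [nsmul_eq_mul, ← Nat.choose_mul_factorial_mul_factorial hkn]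
    push_cast
    ring
  rw [Finset.sum_congr rfl h, Finset.sum_const, card_range, nsmul_eq_mul,
    Nat.factorial_succ]
  have : (n.factorial : ℝ) ≠ 0 := by positivity
  push_cast
  field_simp

open Finset in
private lemma sum_Jq (n : ℕ) :
    ∑ k ∈ range (n+1), (n.choose k) •
        (((2*k).factorial * (2*(n-k)).factorial : ℝ)/(2*n+1).factorial
          / ((k.factorial * (n-k).factorial : ℝ)/(n+1).factorial))
      = ((n:ℝ)+1)*4^n/((2*(n:ℝ)+1)*((2*n).choose n)) := by
  have h : ∀ k ∈ range (n+1), (n.choose k) •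
      (((2*k).factorial * (2*(n-k)).factorial : ℝ)/(2*n+1).factorial
        / ((k.factorial * (n-k).factorial : ℝ)/(n+1).factorial))
      = ((n+1).factorial * n.factorial : ℝ)/(2*n+1).factorial
          * (Nat.centralBinom k * Nat.centralBinom (n-k)) := by
    intro k hk
    have hkn : k ≤ n := Nat.lt_succ_iff.mp (mem_range.mp hk)
    rw [nsmul_eq_mul, Nat.cast_choose ℝ hkn]
    unfold Nat.centralBinom
    rw [Nat.cast_choose ℝ (by omega : k ≤ 2*k), Nat.cast_choose ℝ (by omega : n-k ≤ 2*(n-k))]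
    have e1 : 2*k - k = k := by omega
    have e2 : 2*(n-k) - (n-k) = n-k := by omega
    rw [e1, e2]
    have n1 : (k.factorial : ℝ) ≠ 0 := by positivity
    have n2 : ((n-k).factorial : ℝ) ≠ 0 := by positivity
    have n3 : ((2*n+1).factorial : ℝ) ≠ 0 := by positivity
    have n4 : (n.factorial : ℝ) ≠ 0 := by positivity
    field_simp
  rw [Finset.sum_congr rfl h, ← Finset.mul_sum]
  have hcb : ∑ k ∈ range (n+1), ((Nat.centralBinom k : ℝ) * (Nat.centralBinom (n-k) : ℝ)) = 4^n := by
    have h2 := congrArg (Nat.cast : ℕ → ℝ) (sum_centralBinom_mul n)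
    push_cast at h2
    exact h2
  rw [hcb]
  rw [Nat.cast_choose ℝ (by omega : n ≤ 2*n)]
  have e3 : 2*n - n = n := by omega
  rw [e3, Nat.factorial_succ n]
  have e4 : (2*n+1).factorial = (2*n+1) * (2*n).factorial := Nat.factorial_succ (2*n)
  rw [e4]
  have n4 : (n.factorial : ℝ) ≠ 0 := by positivity
  have n5 : ((2*n).factorial : ℝ) ≠ 0 := by positivity
  have n6 : (2*(n:ℝ)+1) ≠ 0 := by positivity
  push_cast
  field_simp

/-- Chi-squared (Hellinger-2) lower bound on the Bayesian risk of estimating the bias of a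
Bernoulli random variable with uniform prior under absolute-error loss:
the risk of any estimator is at least `(2/27)·(2n+1)·C(2n,n)/((n+1)·4ⁿ)`, and in
particular at least `7/(72√(πn))`. -/
theorem bernoulli_bias_risk_ge_chi_squared
    (n : ℕ) (hn : 1 ≤ n) (ψ : (Fin n → Fin 2) → ℝ) :
    (2 / 27 : ℝ) * ((2 * n + 1) * ((2 * n).choose n : ℝ)) / (((n : ℝ) + 1) * 4 ^ n) ≤
        (∫ w in (0 : ℝ)..1, ∑ x : Fin n → Fin 2,
          w ^ (∑ i, (x i).val) * (1 - w) ^ (n - ∑ i, (x i).val) * |w - ψ x|) ∧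
      7 / (72 * Real.sqrt (Real.pi * n)) ≤
        (∫ w in (0 : ℝ)..1, ∑ x : Fin n → Fin 2,
          w ^ (∑ i, (x i).val) * (1 - w) ^ (n - ∑ i, (x i).val) * |w - ψ x|) := by
  classical
  have hCpos : (0:ℝ) < ((2*n).choose n : ℝ) := by
    exact_mod_cast Nat.choose_pos (by omega : n ≤ 2*n)
  set S : ℝ := ((n:ℝ)+1)*4^n/((2*(n:ℝ)+1)*((2*n).choose n)) with hSdef
  have hSpos : 0 < S := div_pos (by positivity) (by positivity)
  set t : ℝ := 2/(9*S) with htdef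
  set lam : ℝ := 3/2*S with hlamdef
  have ht : 0 < t := by positivity
  have hlam : 0 < lam := by positivity
  have hkle : ∀ x : Fin n → Fin 2, (∑ i, (x i).val) ≤ n := by
    intro x
    calc (∑ i, (x i).val) ≤ ∑ _i : Fin n, 1 :=
          Finset.sum_le_sum (fun i _ => Nat.lt_succ_iff.mp (x i).isLt)
      _ = n := by simp
  set qf : ℕ → ℝ := fun k => ((k.factorial : ℝ) * (n-k).factorial)/(n+1).factorial with hqf
  set Jf : ℕ → ℝ := fun k => (((2*k).factorial : ℝ) * (2*(n-k)).factorial)/(2*n+1).factorial with hJf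
  have hqfpos : ∀ k, 0 < qf k := fun k => by rw [hqf]; positivity
  have hIx : ∀ x : Fin n → Fin 2,
      (∫ w in (0:ℝ)..1, w^(∑ i, (x i).val)*(1-w)^(n - ∑ i, (x i).val)) = qf (∑ i, (x i).val) := by
    intro x
    rw [beta_nat, show (∑ i, (x i).val) + (n - ∑ i, (x i).val) + 1 = n+1 from by
      have := hkle x; omega]
  have hJx : ∀ x : Fin n → Fin 2,
      (∫ w in (0:ℝ)..1, (w^(∑ i, (x i).val)*(1-w)^(n - ∑ i, (x i).val))^2)
        = Jf (∑ i, (x i).val) := by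
    intro x
    rw [intervalIntegral.integral_congr
      (g := fun w : ℝ => w^(2*(∑ i, (x i).val))*(1-w)^(2*(n - ∑ i, (x i).val)))
      (fun w _ => by ring)]
    rw [beta_nat, show 2*(∑ i, (x i).val) + 2*(n - ∑ i, (x i).val) + 1 = 2*n+1 from by
      have := hkle x; omega]
  have hbound : ∀ x : Fin n → Fin 2,
      t * (qf (∑ i, (x i).val) - (Jf (∑ i, (x i).val)/(2*lam*qf (∑ i, (x i).val))
          + lam*(qf (∑ i, (x i).val))*t))
        ≤ ∫ w in (0:ℝ)..1, w^(∑ i, (x i).val)*(1-w)^(n - ∑ i, (x i).val)*|w - ψ x| := by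
    intro x
    have h := one_dim_bound (∑ i, (x i).val) (n - ∑ i, (x i).val) (ψ x) t lam
      (qf (∑ i, (x i).val)) ht hlam (hqfpos _)
    rwa [hIx x, hJx x] at h
  have hswap : (∫ w in (0:ℝ)..1, ∑ x : Fin n → Fin 2,
        w ^ (∑ i, (x i).val) * (1 - w) ^ (n - ∑ i, (x i).val) * |w - ψ x|)
      = ∑ x : Fin n → Fin 2,
        ∫ w in (0:ℝ)..1, w ^ (∑ i, (x i).val) * (1 - w) ^ (n - ∑ i, (x i).val) * |w - ψ x| := by
    apply intervalIntegral.integral_finset_sum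
    intro x _
    apply Continuous.intervalIntegrable
    exact (by continuity : Continuous fun w : ℝ => w ^ (∑ i, (x i).val)
      * (1 - w) ^ (n - ∑ i, (x i).val))|>.mul (continuous_abs.comp (by continuity))
  have hsum1 : ∑ x : Fin n → Fin 2, qf (∑ i, (x i).val) = 1 := by
    rw [sum_group_count n qf]
    simpa using sum_qf n
  have hsum2 : ∑ x : Fin n → Fin 2,
      (Jf (∑ i, (x i).val) / qf (∑ i, (x i).val)) = S := by
    have h := sum_group_count n (fun k => Jf k / qf k)
    rw [h]
    simpa using sum_Jq n
  have hterm : ∀ x : Fin n → Fin 2,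
      t * (qf (∑ i, (x i).val) - (Jf (∑ i, (x i).val)/(2*lam*qf (∑ i, (x i).val))
          + lam*(qf (∑ i, (x i).val))*t))
      = t*qf (∑ i, (x i).val) - (t/(2*lam))*(Jf (∑ i, (x i).val)/qf (∑ i, (x i).val))
          - (lam*t^2)*qf (∑ i, (x i).val) := by
    intro x
    have hq := hqfpos (∑ i, (x i).val)
    field_simp
    ring
  have hlhs : ∑ x : Fin n → Fin 2,
      (t * (qf (∑ i, (x i).val) - (Jf (∑ i, (x i).val)/(2*lam*qf (∑ i, (x i).val))
          + lam*(qf (∑ i, (x i).val))*t)))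
      = t - (t/(2*lam))*S - lam*t^2 := by
    rw [Finset.sum_congr rfl (fun x _ => hterm x)]
    rw [Finset.sum_sub_distrib, Finset.sum_sub_distrib, ← Finset.mul_sum, ← Finset.mul_sum,
      ← Finset.mul_sum, hsum1, hsum2]
    ring
  have halg : t - (t/(2*lam))*S - lam*t^2 = 2/(27*S) := by
    rw [htdef, hlamdef]
    have hS : S ≠ 0 := ne_of_gt hSpos
    field_simp
    ring
  have hmain : 2/(27*S) ≤ ∫ w in (0 : ℝ)..1, ∑ x : Fin n → Fin 2,
      w ^ (∑ i, (x i).val) * (1 - w) ^ (n - ∑ i, (x i).val) * |w - ψ x| := by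
    rw [hswap, ← halg, ← hlhs]
    exact Finset.sum_le_sum (fun x _ => hbound x)
  constructor
  · have heq : (2 / 27 : ℝ) * ((2 * n + 1) * ((2 * n).choose n : ℝ)) / (((n : ℝ) + 1) * 4 ^ n)
        = 2/(27*S) := by
      rw [hSdef]
      have h1 : ((n:ℝ)+1)*4^n ≠ 0 := by positivity
      have h2 : (2*(n:ℝ)+1)*((2*n).choose n : ℝ) ≠ 0 := by positivity
      field_simp
      try ring
    rw [heq]
    exact hmain
  · have hS16 : S ≤ 16 * Real.sqrt (Real.pi * n) / 21 := S_le n hn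
    have hnR : (0:ℝ) < n := by exact_mod_cast hn
    have hsq : 0 < Real.sqrt (Real.pi * n) := Real.sqrt_pos.mpr
      (mul_pos Real.pi_pos hnR)
    calc 7 / (72 * Real.sqrt (Real.pi * n)) ≤ 2/(27*S) := by
          rw [div_le_div_iff₀ (by positivity) (by positivity)]
          nlinarith [hS16, hsq, hSpos]
      _ ≤ _ := hmain
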